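/- The elliptic Kronecker function satisfies the genus-one Fay trisecant identity: for every τ ∈ ℂ with Im(τ) > 0, and for all ℏ, η, z₁, z₂, z₃ ∈ ℂ such that ϑ is nonzero at each of ℏ, η, ℏ−η, η−ℏ, z₁−z₂, z₂−z₃, z₁−z₃, one has φ(ℏ, z₁−z₂)φ(η, z₂−z₃) = φ(η, z₁−z₃)φ(ℏ−η, z₁−z₂) + φ(η−ℏ, z₂−z₃)φ(ℏ, z₁−z₃), where φ(u, v) := ϑ'(0)·ϑ(u+v) / (ϑ(u)·ϑ(v)). -/

import Mathlib

open Complex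

set_option maxHeartbeats 4000000

/-- The odd Jacobi theta function
`ϑ(x) = Σ_{k ∈ ℤ} exp(πiτ(k+1/2)² + 2πi(x+1/2)(k+1/2))`. -/
noncomputable def jacobiTheta1 (τ x : ℂ) : ℂ :=
  ∑' k : ℤ, Complex.exp (Real.pi * Complex.I * τ * ((k : ℂ) + 1 / 2) ^ 2 +
    2 * Real.pi * Complex.I * (x + 1 / 2) * ((k : ℂ) + 1 / 2))

/-- The elliptic Kronecker function `φ(u,v) = ϑ'(0)·ϑ(u+v)/(ϑ(u)·ϑ(v))`. -/
noncomputable def ellKron (τ u v : ℂ) : ℂ :=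
  deriv (jacobiTheta1 τ) 0 * jacobiTheta1 τ (u + v) / (jacobiTheta1 τ u * jacobiTheta1 τ v)

noncomputable def th1term (τ x : ℂ) (k : ℤ) : ℂ :=
  Complex.exp (Real.pi * Complex.I * τ * ((k : ℂ) + 1 / 2) ^ 2 +
    2 * Real.pi * Complex.I * (x + 1 / 2) * ((k : ℂ) + 1 / 2))

lemma th1term_eq (τ x : ℂ) (k : ℤ) :
    th1term τ x k = Complex.exp (Real.pi * Complex.I * τ / 4 + Real.pi * Complex.I * (x + 1/2)) *
      jacobiTheta₂_term k (x + (1 + τ) / 2) τ := by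
  rw [th1term, jacobiTheta₂_term, ← Complex.exp_add]
  ring_nf

lemma summable_norm_th1term (τ : ℂ) (hτ : 0 < τ.im) (x : ℂ) :
    Summable (fun k : ℤ => ‖th1term τ x k‖) := by
  simp only [th1term_eq, norm_mul]
  apply Summable.mul_left
  apply Summable.of_nonneg_of_le (fun n => norm_nonneg _)
    (fun n => norm_jacobiTheta₂_term_le hτ (le_refl |(x + (1+τ)/2).im|) (le_refl τ.im) n)
  simpa only [pow_zero, one_mul] using
    summable_pow_mul_jacobiTheta₂_term_bound |(x + (1+τ)/2).im| hτ 0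

noncomputable def gg (τ X Y : ℂ) (p : ℤ × ℤ) : ℂ :=
  if Odd (p.1 + p.2) then
    Complex.exp (Real.pi * Complex.I * τ * (((p.1 : ℂ))^2 + ((p.2 : ℂ))^2) / 2 +
      Real.pi * Complex.I * (p.1 : ℂ) +
      2 * Real.pi * Complex.I * ((p.1 : ℂ) * X + (p.2 : ℂ) * Y))
  else 0

def phi (p : ℤ × ℤ) : ℤ × ℤ := (p.1 + p.2 + 1, p.1 - p.2)

lemma phi_inj : Function.Injective phi := by
  rintro ⟨a, b⟩ ⟨c, d⟩ h
  simp only [phi, Prod.mk.injEq] at h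
  exact Prod.ext (by omega) (by omega)

lemma gg_comp_phi (τ X Y : ℂ) (p : ℤ × ℤ) :
    gg τ X Y (phi p) = th1term τ (X + Y) p.1 * th1term τ (X - Y) p.2 := by
  obtain ⟨k, l⟩ := p
  have hodd : Odd ((k + l + 1) + (k - l)) := ⟨k, by ring⟩
  rw [gg, phi]
  simp only [if_pos hodd]
  rw [th1term, th1term, ← Complex.exp_add]
  congr 1
  push_cast
  ring

lemma gg_support (τ X Y : ℂ) : Function.support (gg τ X Y) ⊆ Set.range phi := by
  rintro ⟨m, n⟩ hmn
  by_cases h : Odd (m + n)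
  · obtain ⟨j, hj⟩ := h
    exact ⟨(j, j - n), by simp only [phi, Prod.mk.injEq]; constructor <;> omega⟩
  · exact absurd (by simp [gg, if_neg h]) hmn

lemma gg_eq_zero (τ X Y : ℂ) {x : ℤ × ℤ} (hx : x ∉ Set.range phi) : gg τ X Y x = 0 := by
  by_contra h
  exact hx (gg_support τ X Y h)

lemma summable_norm_gg (τ : ℂ) (hτ : 0 < τ.im) (X Y : ℂ) :
    Summable (fun p : ℤ × ℤ => ‖gg τ X Y p‖) := by
  have hc : Summable ((fun p : ℤ × ℤ => ‖gg τ X Y p‖) ∘ phi) := by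
    have : (fun p : ℤ × ℤ => ‖gg τ X Y p‖) ∘ phi =
        fun p : ℤ × ℤ => ‖th1term τ (X + Y) p.1‖ * ‖th1term τ (X - Y) p.2‖ := by
      funext p
      simp [Function.comp, gg_comp_phi]
    rw [this]
    exact (summable_norm_th1term τ hτ (X + Y)).mul_of_nonneg
      (summable_norm_th1term τ hτ (X - Y)) (fun _ => norm_nonneg _) (fun _ => norm_nonneg _)
  exact (Function.Injective.summable_iff phi_inj
    (fun x hx => by simp [gg_eq_zero τ X Y hx])).mp hc

lemma theta_mul (τ : ℂ) (hτ : 0 < τ.im) (X Y : ℂ) :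
    jacobiTheta1 τ (X + Y) * jacobiTheta1 τ (X - Y) = ∑' p : ℤ × ℤ, gg τ X Y p := by
  have h1 : jacobiTheta1 τ (X + Y) = ∑' k : ℤ, th1term τ (X + Y) k := rfl
  have h2 : jacobiTheta1 τ (X - Y) = ∑' k : ℤ, th1term τ (X - Y) k := rfl
  rw [h1, h2, tsum_mul_tsum_of_summable_norm (summable_norm_th1term τ hτ _)
    (summable_norm_th1term τ hτ _)]
  rw [← Function.Injective.tsum_eq phi_inj (gg_support τ X Y)]
  exact tsum_congr fun p => (gg_comp_phi τ X Y p).symm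

noncomputable def EE (τ X Y : ℂ) (m n : ℤ) : ℂ :=
  Complex.exp (Real.pi * Complex.I * τ * (((m : ℂ))^2 + ((n : ℂ))^2) / 2 +
    2 * Real.pi * Complex.I * ((m : ℂ) * X + (n : ℂ) * Y))

noncomputable def cc (m : ℤ) : ℂ := Complex.exp (Real.pi * Complex.I * (m : ℂ))

lemma cc_even {m : ℤ} (h : Even m) : cc m = 1 := by
  obtain ⟨a, rfl⟩ := h
  rw [cc]
  have : (Real.pi : ℂ) * Complex.I * ((a + a : ℤ) : ℂ) = (a : ℤ) * (2 * Real.pi * Complex.I) := by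
    push_cast; ring
  rw [this, Complex.exp_int_mul_two_pi_mul_I]

lemma cc_odd {m : ℤ} (h : Odd m) : cc m = -1 := by
  obtain ⟨a, rfl⟩ := h
  rw [cc]
  have : (Real.pi : ℂ) * Complex.I * ((2 * a + 1 : ℤ) : ℂ) =
      (a : ℤ) * (2 * Real.pi * Complex.I) + Real.pi * Complex.I := by
    push_cast; ring
  rw [this, Complex.exp_add, Complex.exp_int_mul_two_pi_mul_I, one_mul, Complex.exp_pi_mul_I]

lemma cc_add (m n : ℤ) : cc (m + n) = cc m * cc n := by
  rw [cc, cc, cc, ← Complex.exp_add]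
  congr 1
  push_cast
  ring

lemma cc_sq (m : ℤ) : cc m * cc m = 1 := by
  rcases Int.even_or_odd m with h | h
  · rw [cc_even h]; norm_num
  · rw [cc_odd h]; norm_num

lemma ind_eq (X : ℤ) : (if Odd X then (1 : ℂ) else 0) = (1 - cc X) / 2 := by
  rcases Int.even_or_odd X with h | h
  · rw [if_neg (by simpa using h), cc_even h]; norm_num
  · rw [if_pos h, cc_odd h]; norm_num

lemma gg_eq (τ X Y : ℂ) (m n : ℤ) :
    gg τ X Y (m, n) = (if Odd (m + n) then (1 : ℂ) else 0) * (cc m * EE τ X Y m n) := by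
  simp only [gg, EE, cc, Prod.fst, Prod.snd]
  split
  · rw [one_mul, ← Complex.exp_add]
    congr 1
    ring
  · simp

lemma EE_mul (τ x y u v : ℂ) (m n p r : ℤ) :
    EE τ x u m p * EE τ y v n r = EE τ x y m n * EE τ u v p r := by
  simp only [EE, ← Complex.exp_add]
  congr 1
  ring

lemma EE_mul' (τ x y u v : ℂ) (m n p r : ℤ) :
    EE τ x v m r * EE τ y u n p = EE τ x y m n * EE τ u v p r := by
  simp only [EE, ← Complex.exp_add]
  congr 1
  ring

lemma pointwise (τ x y u v : ℂ) (m n p r : ℤ) :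
    gg τ x y (m, n) * gg τ u v (p, r) =
      gg τ x u (m, p) * gg τ y v (n, r) - gg τ x v (m, r) * gg τ y u (n, p) := by
  rw [gg_eq, gg_eq, gg_eq, gg_eq, gg_eq, gg_eq, ind_eq, ind_eq, ind_eq, ind_eq, ind_eq, ind_eq,
    cc_add, cc_add, cc_add, cc_add, cc_add, cc_add]
  have hb := cc_sq n
  have hd := cc_sq p
  have hE2 := EE_mul τ x y u v m n p r
  have hE3 := EE_mul' τ x y u v m n p r
  set a := cc m
  set b := cc n
  set d := cc p
  set e := cc r
  set E1 := EE τ x y m n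
  set E2 := EE τ u v p r
  set E3 := EE τ x u m p
  set E4 := EE τ y v n r
  set E5 := EE τ x v m r
  set E6 := EE τ y u n p
  linear_combination (a * (E1 * E2) * (e - d) / 4) * hb +
    (a * (E1 * E2) * (a * b * e - e) / 4) * hd +
    (- a * b * (1 - a * d) * (1 - b * e) / 4) * hE2 +
    (a * b * (1 - a * e) * (1 - b * d) / 4) * hE3

def sh2 : (ℤ × ℤ) × (ℤ × ℤ) ≃ (ℤ × ℤ) × (ℤ × ℤ) where
  toFun q := ((q.1.1, q.2.1), (q.1.2, q.2.2))
  invFun q := ((q.1.1, q.2.1), (q.1.2, q.2.2))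
  left_inv := fun ⟨⟨m, n⟩, ⟨p, r⟩⟩ => rfl
  right_inv := fun ⟨⟨m, n⟩, ⟨p, r⟩⟩ => rfl

def sh3 : (ℤ × ℤ) × (ℤ × ℤ) ≃ (ℤ × ℤ) × (ℤ × ℤ) where
  toFun q := ((q.1.1, q.2.2), (q.1.2, q.2.1))
  invFun q := ((q.1.1, q.2.1), (q.2.2, q.1.2))
  left_inv := fun ⟨⟨m, n⟩, ⟨p, r⟩⟩ => rfl
  right_inv := fun ⟨⟨m, n⟩, ⟨p, r⟩⟩ => rfl

lemma summable_gg_mul (τ : ℂ) (hτ : 0 < τ.im) (X Y U V : ℂ) :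
    Summable (fun q : (ℤ × ℤ) × (ℤ × ℤ) => gg τ X Y q.1 * gg τ U V q.2) :=
  summable_mul_of_summable_norm (summable_norm_gg τ hτ X Y) (summable_norm_gg τ hτ U V)

lemma weier (τ : ℂ) (hτ : 0 < τ.im) (x y u v : ℂ) :
    jacobiTheta1 τ (x + y) * jacobiTheta1 τ (x - y) *
      (jacobiTheta1 τ (u + v) * jacobiTheta1 τ (u - v)) =
    jacobiTheta1 τ (x + u) * jacobiTheta1 τ (x - u) *
      (jacobiTheta1 τ (y + v) * jacobiTheta1 τ (y - v)) -
    jacobiTheta1 τ (x + v) * jacobiTheta1 τ (x - v) *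
      (jacobiTheta1 τ (y + u) * jacobiTheta1 τ (y - u)) := by
  rw [theta_mul τ hτ x y, theta_mul τ hτ u v, theta_mul τ hτ x u, theta_mul τ hτ y v,
    theta_mul τ hτ x v, theta_mul τ hτ y u,
    tsum_mul_tsum_of_summable_norm (summable_norm_gg τ hτ x y) (summable_norm_gg τ hτ u v),
    tsum_mul_tsum_of_summable_norm (summable_norm_gg τ hτ x u) (summable_norm_gg τ hτ y v),
    tsum_mul_tsum_of_summable_norm (summable_norm_gg τ hτ x v) (summable_norm_gg τ hτ y u)]
  have e2 : (∑' q : (ℤ × ℤ) × (ℤ × ℤ), gg τ x u q.1 * gg τ y v q.2) =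
      ∑' q : (ℤ × ℤ) × (ℤ × ℤ), gg τ x u (sh2 q).1 * gg τ y v (sh2 q).2 :=
    (Equiv.tsum_eq sh2 (fun q => gg τ x u q.1 * gg τ y v q.2)).symm
  have e3 : (∑' q : (ℤ × ℤ) × (ℤ × ℤ), gg τ x v q.1 * gg τ y u q.2) =
      ∑' q : (ℤ × ℤ) × (ℤ × ℤ), gg τ x v (sh3 q).1 * gg τ y u (sh3 q).2 :=
    (Equiv.tsum_eq sh3 (fun q => gg τ x v q.1 * gg τ y u q.2)).symm
  have s2 : Summable (fun q : (ℤ × ℤ) × (ℤ × ℤ) => gg τ x u (sh2 q).1 * gg τ y v (sh2 q).2) :=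
    (Equiv.summable_iff sh2).mpr (summable_gg_mul τ hτ x u y v)
  have s3 : Summable (fun q : (ℤ × ℤ) × (ℤ × ℤ) => gg τ x v (sh3 q).1 * gg τ y u (sh3 q).2) :=
    (Equiv.summable_iff sh3).mpr (summable_gg_mul τ hτ x v y u)
  rw [e2, e3, ← Summable.tsum_sub s2 s3]
  refine tsum_congr fun q => ?_
  obtain ⟨⟨m, n⟩, ⟨p, r⟩⟩ := q
  exact pointwise τ x y u v m n p r

lemma th1term_neg (τ y : ℂ) (k : ℤ) : th1term τ (-y) (-1 - k) = -th1term τ y k := by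
  rw [th1term, th1term]
  have h : Real.pi * Complex.I * τ * (((-1 - k : ℤ) : ℂ) + 1 / 2) ^ 2 +
      2 * Real.pi * Complex.I * (-y + 1 / 2) * (((-1 - k : ℤ) : ℂ) + 1 / 2) =
      (Real.pi * Complex.I * τ * ((k : ℂ) + 1 / 2) ^ 2 +
        2 * Real.pi * Complex.I * (y + 1 / 2) * ((k : ℂ) + 1 / 2)) +
      Real.pi * Complex.I * ((-2 * k - 1 : ℤ) : ℂ) := by
    push_cast; ring
  rw [h, Complex.exp_add]
  rw [show Complex.exp (Real.pi * Complex.I * ((-2 * k - 1 : ℤ) : ℂ)) = cc (-2 * k - 1) from rfl,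
    cc_odd ⟨-k - 1, by ring⟩]
  ring

lemma theta_neg (τ y : ℂ) : jacobiTheta1 τ (-y) = -jacobiTheta1 τ y := by
  have h1 : jacobiTheta1 τ (-y) = ∑' k : ℤ, th1term τ (-y) k := rfl
  have h2 : jacobiTheta1 τ y = ∑' k : ℤ, th1term τ y k := rfl
  rw [h1, h2, ← Equiv.tsum_eq (Equiv.subLeft (-1 : ℤ)) (th1term τ (-y))]
  have : ∀ k : ℤ, th1term τ (-y) (Equiv.subLeft (-1 : ℤ) k) = -th1term τ y k := by
    intro k
    have : Equiv.subLeft (-1 : ℤ) k = -1 - k := rfl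
    rw [this, th1term_neg]
  rw [tsum_congr this, tsum_neg]

lemma key (τ : ℂ) (hτ : 0 < τ.im) (a b x y : ℂ) :
    jacobiTheta1 τ (a + x) * jacobiTheta1 τ (b + y) *
      (jacobiTheta1 τ (x + y) * jacobiTheta1 τ (a - b)) =
    jacobiTheta1 τ (a + x + y) * jacobiTheta1 τ b *
      (jacobiTheta1 τ x * jacobiTheta1 τ (a - b - y)) +
    jacobiTheta1 τ (b + x + y) * jacobiTheta1 τ a *
      (jacobiTheta1 τ (a - b + x) * jacobiTheta1 τ y) := by
  have h := weier τ hτ ((a + b + x + y) / 2) ((a - b + x - y) / 2)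
    ((x + y + a - b) / 2) ((x + y - a + b) / 2)
  rw [show (a + b + x + y) / 2 + (a - b + x - y) / 2 = a + x by ring,
    show (a + b + x + y) / 2 - (a - b + x - y) / 2 = b + y by ring,
    show (x + y + a - b) / 2 + (x + y - a + b) / 2 = x + y by ring,
    show (x + y + a - b) / 2 - (x + y - a + b) / 2 = a - b by ring,
    show (a + b + x + y) / 2 + (x + y + a - b) / 2 = a + x + y by ring,
    show (a + b + x + y) / 2 - (x + y + a - b) / 2 = b by ring,
    show (a - b + x - y) / 2 + (x + y - a + b) / 2 = x by ring,
    show (a - b + x - y) / 2 - (x + y - a + b) / 2 = a - b - y by ring,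
    show (a + b + x + y) / 2 + (x + y - a + b) / 2 = b + x + y by ring,
    show (a + b + x + y) / 2 - (x + y - a + b) / 2 = a by ring,
    show (a - b + x - y) / 2 + (x + y + a - b) / 2 = a - b + x by ring,
    show (a - b + x - y) / 2 - (x + y + a - b) / 2 = -y by ring,
    theta_neg τ y] at h
  linear_combination h

/-- The elliptic Kronecker function satisfies the genus-one Fay trisecant identity. -/
theorem elliptic_kronecker_fay (τ : ℂ) (hτ : 0 < τ.im) (ℏ η z₁ z₂ z₃ : ℂ)
    (h1 : jacobiTheta1 τ ℏ ≠ 0) (h2 : jacobiTheta1 τ η ≠ 0)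
    (h3 : jacobiTheta1 τ (ℏ - η) ≠ 0) (h4 : jacobiTheta1 τ (η - ℏ) ≠ 0)
    (h5 : jacobiTheta1 τ (z₁ - z₂) ≠ 0) (h6 : jacobiTheta1 τ (z₂ - z₃) ≠ 0)
    (h7 : jacobiTheta1 τ (z₁ - z₃) ≠ 0) :
    ellKron τ ℏ (z₁ - z₂) * ellKron τ η (z₂ - z₃) =
      ellKron τ η (z₁ - z₃) * ellKron τ (ℏ - η) (z₁ - z₂) +
        ellKron τ (η - ℏ) (z₂ - z₃) * ellKron τ ℏ (z₁ - z₃) := by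
  have hk := key τ hτ ℏ η (z₁ - z₂) (z₂ - z₃)
  rw [show z₁ - z₂ + (z₂ - z₃) = z₁ - z₃ by ring,
    show ℏ + (z₁ - z₂) + (z₂ - z₃) = ℏ + (z₁ - z₃) by ring,
    show η + (z₁ - z₂) + (z₂ - z₃) = η + (z₁ - z₃) by ring] at hk
  simp only [ellKron]
  rw [show η - ℏ + (z₂ - z₃) = -(ℏ - η - (z₂ - z₃)) by ring, theta_neg,
    show η - ℏ = -(ℏ - η) by ring, theta_neg]
  set c := deriv (jacobiTheta1 τ) 0
  field_simp
  linear_combination c ^ 2 * hk
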